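/- Let G and H be groups acting compatibly on each other. Then η(G,H) decomposes as an iterated internal semidirect product: η(G,H) = ([G,H^φ] ⋊ G) ⋊ H^φ, i.e., [G,H^φ] is normal in [G,H^φ]·G, the product [G,H^φ]·G is normal in η(G,H), and η(G,H) = [G,H^φ]·G·H^φ with [G,H^φ]·G ∩ H^φ = 1 and [G,H^φ] ∩ G = 1 inside [G,H^φ]·G. -/

import Mathlib

open Monoid
open scoped commutatorElement

/-- A pair of compatible (right) actions of groups `G` and `H` on each other,
in the sense of Brown–Loday.  `aGH g h` denotes `g ^ h` and `aHG h g` denotes `h ^ g`. -/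
structure CompatibleActions (G H : Type*) [Group G] [Group H] where
  aGH : G → H → G
  aHG : H → G → H
  aGH_one : ∀ g, aGH g 1 = g
  aGH_mul : ∀ g h₁ h₂, aGH g (h₁ * h₂) = aGH (aGH g h₁) h₂
  aGH_hom : ∀ g₁ g₂ h, aGH (g₁ * g₂) h = aGH g₁ h * aGH g₂ h
  aHG_one : ∀ h, aHG h 1 = h
  aHG_mul : ∀ h g₁ g₂, aHG h (g₁ * g₂) = aHG (aHG h g₁) g₂
  aHG_hom : ∀ h₁ h₂ g, aHG (h₁ * h₂) g = aHG h₁ g * aHG h₂ g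
  compat₁ : ∀ g g₁ h, aGH g (aHG h g₁) = g₁⁻¹ * aGH (g₁ * g * g₁⁻¹) h * g₁
  compat₂ : ∀ h h₁ g, aHG h (aGH g h₁) = h₁⁻¹ * aHG (h₁ * h * h₁⁻¹) g * h₁

variable {G H : Type*} [Group G] [Group H]

/-- Relators of the group `η(G,H)`:
`[g,h^φ]^{g₁} = [g^{g₁}, (h^{g₁})^φ]` and `[g,h^φ]^{h₁^φ} = [g^{h₁}, (h^{h₁})^φ]`. -/
def etaRels (c : CompatibleActions G H) : Set (Coprod G H) :=
  let iG : G →* Coprod G H := Coprod.inl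
  let iH : H →* Coprod G H := Coprod.inr
  (Set.range fun p : G × G × H =>
    ((iG p.1)⁻¹ * ⁅iG p.2.1, iH p.2.2⁆ * iG p.1) *
      ⁅iG (p.1⁻¹ * p.2.1 * p.1), iH (c.aHG p.2.2 p.1)⁆⁻¹) ∪
  (Set.range fun p : H × G × H =>
    ((iH p.1)⁻¹ * ⁅iG p.2.1, iH p.2.2⁆ * iH p.1) *
      ⁅iG (c.aGH p.2.1 p.1), iH (p.1⁻¹ * p.2.2 * p.1)⁆⁻¹)

/-- The Brown–Loday group `η(G,H)`. -/
def EtaGroup (c : CompatibleActions G H) : Type _ :=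
  Coprod G H ⧸ Subgroup.normalClosure (etaRels c)

instance (c : CompatibleActions G H) : Group (EtaGroup c) :=
  QuotientGroup.Quotient.group _

/-- The canonical map `G → η(G,H)`. -/
def etaG (c : CompatibleActions G H) : G →* EtaGroup c :=
  (QuotientGroup.mk' _).comp Coprod.inl

/-- The canonical map `H → η(G,H)`, `h ↦ h^φ`. -/
def etaH (c : CompatibleActions G H) : H →* EtaGroup c :=
  (QuotientGroup.mk' _).comp Coprod.inr

/-- The set of tensors `T⊗(G,H) = {[g, h^φ]} ⊆ η(G,H)`. -/
def tensorSet (c : CompatibleActions G H) : Set (EtaGroup c) :=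
  {x | ∃ g h, x = ⁅etaG c g, etaH c h⁆}

/-- The non-abelian tensor product `[G, H^φ] ≤ η(G,H)`. -/
def tensorSub (c : CompatibleActions G H) : Subgroup (EtaGroup c) :=
  Subgroup.closure (tensorSet c)

/-- The compatible pair of conjugation actions of `G` on itself, giving `ν(G) = η(G,G)`. -/
def conjActions (G : Type*) [Group G] : CompatibleActions G G where
  aGH g h := h⁻¹ * g * h
  aHG h g := g⁻¹ * h * g
  aGH_one := by intro g; group
  aGH_mul := by intros; group
  aGH_hom := by intros; group
  aHG_one := by intro h; group
  aHG_mul := by intros; group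
  aHG_hom := by intros; group
  compat₁ := by intros; group
  compat₂ := by intros; group

/-- `ν(G)`. -/
abbrev NuGroup (G : Type*) [Group G] := EtaGroup (conjActions G)

/-- A group is locally finite if all its finitely generated subgroups are finite. -/
def IsLocallyFiniteGroup (K : Type*) [Group K] : Prop :=
  ∀ S : Subgroup K, S.FG → Finite S

-- Lemma A
lemma etaRel₁ (c : CompatibleActions G H) (g₁ g : G) (h : H) :
    (etaG c g₁)⁻¹ * ⁅etaG c g, etaH c h⁆ * etaG c g₁ =
      ⁅etaG c (g₁⁻¹ * g * g₁), etaH c (c.aHG h g₁)⁆ := by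
  have hmem : ((Coprod.inl g₁ : Coprod G H)⁻¹ * ⁅(Coprod.inl g : Coprod G H), Coprod.inr h⁆ *
        Coprod.inl g₁) * ⁅(Coprod.inl (g₁⁻¹ * g * g₁) : Coprod G H),
        Coprod.inr (c.aHG h g₁)⁆⁻¹ ∈ Subgroup.normalClosure (etaRels c) :=
    Subgroup.subset_normalClosure (Or.inl ⟨(g₁, g, h), rfl⟩)
  have h1 : (QuotientGroup.mk' (Subgroup.normalClosure (etaRels c)))
      (((Coprod.inl g₁ : Coprod G H)⁻¹ * ⁅(Coprod.inl g : Coprod G H), Coprod.inr h⁆ *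
        Coprod.inl g₁) * ⁅(Coprod.inl (g₁⁻¹ * g * g₁) : Coprod G H),
        Coprod.inr (c.aHG h g₁)⁆⁻¹) = 1 := by
    rw [QuotientGroup.mk'_apply, QuotientGroup.eq_one_iff]; exact hmem
  rw [map_mul, map_inv, mul_inv_eq_one] at h1
  simp only [etaG, etaH, MonoidHom.comp_apply, map_mul, map_inv]
  exact h1

-- Lemma B
lemma etaRel₂ (c : CompatibleActions G H) (h₁ : H) (g : G) (h : H) :
    (etaH c h₁)⁻¹ * ⁅etaG c g, etaH c h⁆ * etaH c h₁ =
      ⁅etaG c (c.aGH g h₁), etaH c (h₁⁻¹ * h * h₁)⁆ := by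
  have hmem : ((Coprod.inr h₁ : Coprod G H)⁻¹ * ⁅(Coprod.inl g : Coprod G H), Coprod.inr h⁆ *
        Coprod.inr h₁) * ⁅(Coprod.inl (c.aGH g h₁) : Coprod G H),
        Coprod.inr (h₁⁻¹ * h * h₁)⁆⁻¹ ∈ Subgroup.normalClosure (etaRels c) :=
    Subgroup.subset_normalClosure (Or.inr ⟨(h₁, g, h), rfl⟩)
  have h1 : (QuotientGroup.mk' (Subgroup.normalClosure (etaRels c)))
      (((Coprod.inr h₁ : Coprod G H)⁻¹ * ⁅(Coprod.inl g : Coprod G H), Coprod.inr h⁆ *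
        Coprod.inr h₁) * ⁅(Coprod.inl (c.aGH g h₁) : Coprod G H),
        Coprod.inr (h₁⁻¹ * h * h₁)⁆⁻¹) = 1 := by
    rw [QuotientGroup.mk'_apply, QuotientGroup.eq_one_iff]; exact hmem
  rw [map_mul, map_inv, mul_inv_eq_one] at h1
  simp only [etaG, etaH, MonoidHom.comp_apply, map_mul, map_inv]
  exact h1

lemma eta_conj_GH (c : CompatibleActions G H) (g : G) (h : H) :
    (etaH c h)⁻¹ * etaG c g * etaH c h = etaG c g * ⁅etaG c g⁻¹, etaH c h⁻¹⁆ := by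
  simp only [commutatorElement_def, map_inv]; group

lemma eta_closure_top (c : CompatibleActions G H) :
    Subgroup.closure (Set.range (etaG c) ∪ Set.range (etaH c)) = ⊤ := by
  rw [eq_top_iff]
  intro x _
  obtain ⟨y, rfl⟩ := QuotientGroup.mk'_surjective (Subgroup.normalClosure (etaRels c)) x
  refine Coprod.induction_on y (fun g => ?_) (fun h => ?_) (fun a b ha hb => ?_)
  · exact Subgroup.subset_closure (Or.inl ⟨g, rfl⟩)
  · exact Subgroup.subset_closure (Or.inr ⟨h, rfl⟩)
  · rw [map_mul]; exact mul_mem ha hb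

lemma closure_normal_of_conj {K : Type*} [Group K] {S T : Set K}
    (hT : Subgroup.closure T = ⊤)
    (hc : ∀ t ∈ T, ∀ s ∈ S, t * s * t⁻¹ ∈ Subgroup.closure S)
    (hc' : ∀ t ∈ T, ∀ s ∈ S, t⁻¹ * s * t ∈ Subgroup.closure S) :
    (Subgroup.closure S).Normal := by
  have key : ∀ u : K, (∀ s ∈ S, u * s * u⁻¹ ∈ Subgroup.closure S) →
      ∀ x ∈ Subgroup.closure S, u * x * u⁻¹ ∈ Subgroup.closure S := by
    intro u hu x hx
    have hmap : Subgroup.map (MulAut.conj u).toMonoidHom (Subgroup.closure S) ≤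
        Subgroup.closure S := by
      rw [MonoidHom.map_closure, Subgroup.closure_le]
      rintro _ ⟨s, hs, rfl⟩
      simpa using hu s hs
    have hm : (MulAut.conj u).toMonoidHom x ∈
        Subgroup.map (MulAut.conj u).toMonoidHom (Subgroup.closure S) :=
      Subgroup.mem_map_of_mem _ hx
    simpa using hmap hm
  rw [← Subgroup.normalizer_eq_top_iff, eq_top_iff, ← hT, Subgroup.closure_le]
  intro t ht
  rw [SetLike.mem_coe, Subgroup.mem_normalizer_iff]
  intro x
  constructor
  · exact fun hx => key t (hc t ht) x hx
  · intro hx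
    have := key t⁻¹ (fun s hs => by simpa using hc' t ht s hs) _ hx
    simpa [mul_assoc] using this

lemma tensorSub_normal (c : CompatibleActions G H) : (tensorSub c).Normal := by
  refine closure_normal_of_conj (eta_closure_top c) ?_ ?_
  · rintro t (⟨g₁, rfl⟩ | ⟨h₁, rfl⟩) s ⟨g, h, rfl⟩
    · have := etaRel₁ c g₁⁻¹ g h
      simp only [map_inv, inv_inv] at this
      rw [this]
      exact Subgroup.subset_closure ⟨_, _, rfl⟩
    · have := etaRel₂ c h₁⁻¹ g h
      simp only [map_inv, inv_inv] at this
      rw [this]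
      exact Subgroup.subset_closure ⟨_, _, rfl⟩
  · rintro t (⟨g₁, rfl⟩ | ⟨h₁, rfl⟩) s ⟨g, h, rfl⟩
    · rw [etaRel₁ c g₁ g h]
      exact Subgroup.subset_closure ⟨_, _, rfl⟩
    · rw [etaRel₂ c h₁ g h]
      exact Subgroup.subset_closure ⟨_, _, rfl⟩

lemma sup_eq_closure (c : CompatibleActions G H) :
    tensorSub c ⊔ (etaG c).range =
      Subgroup.closure (tensorSet c ∪ Set.range (etaG c)) := by
  rw [Subgroup.closure_union, tensorSub, ← MonoidHom.coe_range, Subgroup.closure_eq]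

lemma sup_normal (c : CompatibleActions G H) : (tensorSub c ⊔ (etaG c).range).Normal := by
  rw [sup_eq_closure]
  have hmemT : ∀ g h, ⁅etaG c g, etaH c h⁆ ∈
      Subgroup.closure (tensorSet c ∪ Set.range (etaG c)) := fun g h =>
    Subgroup.subset_closure (Or.inl ⟨g, h, rfl⟩)
  have hmemG : ∀ g, etaG c g ∈
      Subgroup.closure (tensorSet c ∪ Set.range (etaG c)) := fun g =>
    Subgroup.subset_closure (Or.inr ⟨g, rfl⟩)
  refine closure_normal_of_conj (eta_closure_top c) ?_ ?_
  · rintro t (⟨g₁, rfl⟩ | ⟨h₁, rfl⟩) s (⟨g, h, rfl⟩ | ⟨g, rfl⟩)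
    · have := etaRel₁ c g₁⁻¹ g h
      simp only [map_inv, inv_inv] at this
      rw [this]; exact hmemT _ _
    · have : etaG c g₁ * etaG c g * (etaG c g₁)⁻¹ = etaG c (g₁ * g * g₁⁻¹) := by
        simp [map_mul]
      rw [this]; exact hmemG _
    · have := etaRel₂ c h₁⁻¹ g h
      simp only [map_inv, inv_inv] at this
      rw [this]; exact hmemT _ _
    · have := eta_conj_GH c g h₁⁻¹
      simp only [map_inv, inv_inv] at this
      rw [this]
      exact mul_mem (hmemG g) (by simpa using hmemT g⁻¹ h₁)
  · rintro t (⟨g₁, rfl⟩ | ⟨h₁, rfl⟩) s (⟨g, h, rfl⟩ | ⟨g, rfl⟩)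
    · rw [etaRel₁ c g₁ g h]; exact hmemT _ _
    · have : (etaG c g₁)⁻¹ * etaG c g * etaG c g₁ = etaG c (g₁⁻¹ * g * g₁) := by
        simp [map_mul]
      rw [this]; exact hmemG _
    · rw [etaRel₂ c h₁ g h]; exact hmemT _ _
    · rw [eta_conj_GH c g h₁]
      exact mul_mem (hmemG g) (hmemT g⁻¹ h₁⁻¹)

def etaProj (c : CompatibleActions G H) : EtaGroup c →* G × H :=
  QuotientGroup.lift _ (Coprod.lift (MonoidHom.inl G H) (MonoidHom.inr G H)) (by
    intro x hx
    refine Subgroup.normalClosure_le_normal ?_ hx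
    rintro _ (⟨⟨g₁, g, h⟩, rfl⟩ | ⟨⟨h₁, g, h⟩, rfl⟩) <;>
      simp [MonoidHom.mem_ker, commutatorElement_def, Prod.ext_iff] <;> group)

lemma etaProj_etaG (c : CompatibleActions G H) (g : G) : etaProj c (etaG c g) = (g, 1) := rfl

lemma etaProj_etaH (c : CompatibleActions G H) (h : H) : etaProj c (etaH c h) = (1, h) := rfl

/-- The decomposition `η(G,H) = ([G,H^φ] ⋊ G) ⋊ H^φ` as iterated internal semidirect
products. -/
theorem eta_decomposition {G H : Type*} [Group G] [Group H] (c : CompatibleActions G H) :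
    ((tensorSub c).subgroupOf (tensorSub c ⊔ (etaG c).range)).Normal ∧
    (tensorSub c ⊔ (etaG c).range).Normal ∧
    tensorSub c ⊔ (etaG c).range ⊔ (etaH c).range = ⊤ ∧
    (tensorSub c ⊔ (etaG c).range) ⊓ (etaH c).range = ⊥ ∧
    tensorSub c ⊓ (etaG c).range = ⊥ := by
  refine ⟨(tensorSub_normal c).subgroupOf _, sup_normal c, ?_, ?_, ?_⟩
  · rw [eq_top_iff, ← eta_closure_top c, Subgroup.closure_le]
    rintro _ (⟨g, rfl⟩ | ⟨h, rfl⟩)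
    · exact Subgroup.mem_sup_left (Subgroup.mem_sup_right ⟨g, rfl⟩)
    · exact Subgroup.mem_sup_right ⟨h, rfl⟩
  · rw [eq_bot_iff]
    intro x hx
    rw [Subgroup.mem_inf] at hx
    obtain ⟨hx1, h, rfl⟩ := hx
    have hker : tensorSub c ⊔ (etaG c).range ≤ ((MonoidHom.snd G H).comp (etaProj c)).ker := by
      rw [sup_le_iff]
      constructor
      · rw [tensorSub, Subgroup.closure_le]
        rintro _ ⟨g', h', rfl⟩
        simp [MonoidHom.mem_ker, map_commutatorElement, etaProj_etaG, etaProj_etaH,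
          commutatorElement_def]
      · rintro _ ⟨g', rfl⟩
        simp [MonoidHom.mem_ker, etaProj_etaG]
    have h1 := hker hx1
    rw [MonoidHom.mem_ker, MonoidHom.comp_apply, etaProj_etaH] at h1
    simp only [MonoidHom.coe_snd] at h1
    simp [show h = 1 from h1, Subgroup.mem_bot]
  · rw [eq_bot_iff]
    intro x hx
    rw [Subgroup.mem_inf] at hx
    obtain ⟨hx1, g, rfl⟩ := hx
    have hker : tensorSub c ≤ (etaProj c).ker := by
      rw [tensorSub, Subgroup.closure_le]
      rintro _ ⟨g', h', rfl⟩
      simp [MonoidHom.mem_ker, map_commutatorElement, etaProj_etaG, etaProj_etaH,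
        commutatorElement_def, Prod.ext_iff]
    have h1 := hker hx1
    rw [MonoidHom.mem_ker, etaProj_etaG] at h1
    have hg : g = 1 := (Prod.ext_iff.mp h1).1
    simp [hg, Subgroup.mem_bot]
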